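/- For every θ ∈ [0, π], every γ ∈ [0, 1], and every real u with |u − cos θ| ≤ γ, one has |arccos(u) − θ| ≤ 2·√γ. (This is the quantitative arccos-perturbation estimate, 'arccos(cos θ ± γ) = θ ± 2√γ', used in the proof that ρ_ε ≤ 2√(5ε).) -/

import Mathlib

open Real

private lemma arccos_aux1 (θ φ γ : ℝ) (h0 : 0 ≤ θ) (hle : θ ≤ φ) (hπ : φ ≤ Real.pi)
    (hγ1 : γ ≤ 1) (h : Real.cos θ - Real.cos φ ≤ γ) :
    φ - θ ≤ 2 * Real.sqrt γ := by
  by_contra hc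
  push_neg at hc
  have hpi := Real.pi_gt_three
  set d := (φ - θ) / 2 with hdd
  set s := (φ + θ) / 2 with hss
  have hγ0 : 0 ≤ γ := le_trans (by linarith [Real.cos_le_cos_of_nonneg_of_le_pi h0 hπ hle]) h
  have hrd : Real.sqrt γ < d := by
    have := Real.sqrt_nonneg γ
    rw [hdd]; linarith
  have hd0 : 0 ≤ d := by rw [hdd]; linarith
  have hd2 : d ≤ Real.pi / 2 := by rw [hdd]; linarith
  have hsd : d ≤ s := by rw [hdd, hss]; linarith
  have hsπ : s ≤ Real.pi - d := by rw [hdd, hss]; linarith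
  have e : Real.cos θ - Real.cos φ = 2 * Real.sin s * Real.sin d := by
    rw [Real.cos_sub_cos, show (θ + φ)/2 = s from by rw [hss]; ring,
      show (θ - φ)/2 = -d from by rw [hdd]; ring, Real.sin_neg]
    ring
  have hmono : Real.sin d ≤ Real.sin s := by
    rcases le_or_gt s (Real.pi / 2) with h1 | h1
    · exact Real.strictMonoOn_sin.monotoneOn ⟨by linarith, by linarith⟩
        ⟨by linarith, h1⟩ hsd
    · rw [← Real.sin_pi_sub s]
      exact Real.strictMonoOn_sin.monotoneOn ⟨by linarith, by linarith⟩
        ⟨by linarith, by linarith⟩ (by linarith)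
  have hg1 : Real.sqrt γ ≤ 1 := Real.sqrt_le_one.mpr hγ1
  have hg0 : 0 ≤ Real.sqrt γ := Real.sqrt_nonneg γ
  have hsd0 : 0 ≤ Real.sin d := Real.sin_nonneg_of_nonneg_of_le_pi hd0 (by linarith)
  have hsg : Real.sin (Real.sqrt γ) < Real.sin d :=
    Real.strictMonoOn_sin ⟨by linarith, by linarith⟩ ⟨by linarith, hd2⟩ hrd
  have hsg0 : 0 ≤ Real.sin (Real.sqrt γ) :=
    Real.sin_nonneg_of_nonneg_of_le_pi hg0 (by linarith)
  have hcube : Real.sqrt γ - (Real.sqrt γ) ^ 3 / 4 ≤ Real.sin (Real.sqrt γ) := by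
    rcases eq_or_lt_of_le hg0 with h2 | h2
    · rw [← h2]; norm_num
    · linarith [Real.sin_gt_sub_cube h2, pow_nonneg hg0 3]
  have hsq : Real.sqrt γ ^ 2 = γ := Real.sq_sqrt hγ0
  have h7 : 0 ≤ Real.sqrt γ - (Real.sqrt γ) ^ 3 / 4 := by nlinarith
  have hprod1 : Real.sin d * Real.sin d ≤ Real.sin s * Real.sin d :=
    mul_le_mul_of_nonneg_right hmono hsd0
  have hprod2 : Real.sin (Real.sqrt γ) * Real.sin (Real.sqrt γ) < Real.sin d * Real.sin d :=
    mul_self_lt_mul_self hsg0 hsg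
  have hprod3 : (Real.sqrt γ - (Real.sqrt γ) ^ 3 / 4) * (Real.sqrt γ - (Real.sqrt γ) ^ 3 / 4)
      ≤ Real.sin (Real.sqrt γ) * Real.sin (Real.sqrt γ) :=
    mul_le_mul hcube hcube h7 hsg0
  have exp : (Real.sqrt γ - (Real.sqrt γ) ^ 3 / 4) * (Real.sqrt γ - (Real.sqrt γ) ^ 3 / 4)
      = γ - γ ^ 2 / 2 + γ ^ 3 / 16 := by
    linear_combination (1 - (Real.sqrt γ ^ 2 + γ) / 2
      + (Real.sqrt γ ^ 4 + Real.sqrt γ ^ 2 * γ + γ ^ 2) / 16) * hsq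
  have key2 : γ ≤ 2 * (γ - γ ^ 2 / 2 + γ ^ 3 / 16) := by
    nlinarith [mul_nonneg hγ0 (sub_nonneg.mpr hγ1), pow_nonneg hγ0 3]
  rw [exp] at hprod3
  linarith [hprod1, hprod2, hprod3, key2, h, e.symm.trans_le h]

private lemma arccos_aux2 (θ φ γ : ℝ) (hθ : θ ∈ Set.Icc 0 Real.pi) (hφ : φ ∈ Set.Icc 0 Real.pi)
    (hγ1 : γ ≤ 1) (h : |Real.cos φ - Real.cos θ| ≤ γ) : |φ - θ| ≤ 2 * Real.sqrt γ := by
  obtain ⟨hl, hr⟩ := abs_le.1 h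
  rcases le_total θ φ with h1 | h1
  · rw [abs_of_nonneg (by linarith)]
    exact arccos_aux1 θ φ γ hθ.1 h1 hφ.2 hγ1 (by linarith)
  · rw [abs_of_nonpos (by linarith), neg_sub]
    exact arccos_aux1 φ θ γ hφ.1 h1 hθ.2 hγ1 (by linarith)

/-- The quantitative arccos-perturbation estimate:
`arccos(cos θ ± γ) = θ ± 2√γ` for `γ ∈ [0,1]`. -/
theorem stmt_10 (θ : ℝ) (hθ : θ ∈ Set.Icc 0 Real.pi) (γ : ℝ) (hγ0 : 0 ≤ γ) (hγ1 : γ ≤ 1)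
    (u : ℝ) (hu : |u - Real.cos θ| ≤ γ) :
    |Real.arccos u - θ| ≤ 2 * Real.sqrt γ := by
  obtain ⟨hul, hur⟩ := abs_le.1 hu
  have hc1 : Real.cos θ ≤ 1 := Real.cos_le_one θ
  have hc2 : -1 ≤ Real.cos θ := Real.neg_one_le_cos θ
  have hcc : |Real.cos (Real.arccos u) - Real.cos θ| ≤ γ := by
    rcases lt_or_ge u (-1) with h1 | h1
    · rw [Real.arccos_eq_pi.mpr (le_of_lt h1), Real.cos_pi]
      rw [abs_le]; constructor <;> linarith
    · rcases lt_or_ge 1 u with h2 | h2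
      · rw [Real.arccos_eq_zero.mpr (le_of_lt h2), Real.cos_zero]
        rw [abs_le]; constructor <;> linarith
      · rw [Real.cos_arccos h1 h2]; exact hu
  exact arccos_aux2 θ (Real.arccos u) γ hθ ⟨Real.arccos_nonneg u, Real.arccos_le_pi u⟩ hγ1 hcc
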